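/- Let α = (μ+λ)/2 and β = (3μ+λ)/2 with μ > 0 and λ > −2μ/3, and let φ, ψ be structural sets. If a C³ vector field u⃗: Ω → ℝ³ ⊂ ℝ_{0,3} on an open set Ω ⊆ ℝ³ satisfies the generalized Lamé–Navier system α(φ∂ u⃗ ψ∂) + β(φ∂ ψ∂ u⃗) = 0 in Ω, then ψ∂ ψ∂ ψ∂ u⃗ = 0 in Ω. -/

import Mathlib

noncomputable section

abbrev V3 : Type := Fin 3 → ℝ

/-- The negative-definite quadratic form on `ℝ³`, so that `CliffordAlgebra Q3 = ℝ_{0,3}`. -/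
def Q3 : QuadraticForm ℝ V3 := -(QuadraticMap.weightedSumSquares ℝ (fun _ : Fin 3 => (1:ℝ)))

/-- The real Clifford algebra `ℝ_{0,3}`. -/
abbrev Cl3 : Type := CliffordAlgebra Q3

namespace Cl3

def bCl : Module.Basis (Module.Free.ChooseBasisIndex ℝ Cl3) ℝ Cl3 := Module.Free.chooseBasis ℝ Cl3

def toLp : Cl3 →ₗ[ℝ] lp (fun _ : Module.Free.ChooseBasisIndex ℝ Cl3 => ℝ) ⊤ where
  toFun x := ⟨fun i => bCl.repr x i, by
    apply memℓp_infty
    have h1 : (Set.range ((bCl.repr x) : _ → ℝ)).Finite := by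
      apply Set.Finite.subset (((bCl.repr x).frange : Finset ℝ).finite_toSet.insert 0)
      rintro y ⟨i, rfl⟩
      by_cases h : (bCl.repr x) i = 0
      · simp [h]
      · exact Set.mem_insert_of_mem _ (by
          simp only [Finset.mem_coe, Finsupp.mem_frange]
          exact ⟨h, i, rfl⟩)
    have h2 : (Set.range fun i => ‖(bCl.repr x) i‖).Finite := by
      have := h1.image norm
      apply this.subset
      rintro y ⟨i, rfl⟩
      exact ⟨(bCl.repr x) i, ⟨i, rfl⟩, rfl⟩
    exact h2.bddAbove⟩
  map_add' x y := by ext i; simp; rfl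
  map_smul' c x := by ext i; simp

lemma toLp_injective : Function.Injective toLp := by
  intro x y h
  apply bCl.repr.injective
  ext i
  exact congrFun (congrArg Subtype.val h) i

instance : NormedAddCommGroup Cl3 := NormedAddCommGroup.induced Cl3 _ toLp toLp_injective
instance : NormedSpace ℝ Cl3 := NormedSpace.induced ℝ Cl3 _ toLp

end Cl3

/-- Embedding of vectors `ℝ³ ⊂ ℝ_{0,3}`. -/
def ι3 : V3 →ₗ[ℝ] Cl3 := CliffordAlgebra.ι Q3

/-- `ψ` is a structural set: `ψⁱψʲ + ψʲψⁱ = -2δᵢⱼ` inside `ℝ_{0,3}`. -/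
def StructuralSet (ψ : Fin 3 → V3) : Prop :=
  ∀ i j, ι3 (ψ i) * ι3 (ψ j) + ι3 (ψ j) * ι3 (ψ i)
      = algebraMap ℝ Cl3 (if i = j then -2 else 0)

/-- Partial derivative `∂f/∂xᵢ`. -/
def pd (i : Fin 3) (f : V3 → Cl3) : V3 → Cl3 := fun x => fderiv ℝ f x (Pi.single i 1)

/-- Left Dirac operator `ψ∂ f = Σᵢ ψⁱ ∂f/∂xᵢ`. -/
def DL (ψ : Fin 3 → V3) (f : V3 → Cl3) : V3 → Cl3 := fun x => ∑ i, ι3 (ψ i) * pd i f x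

/-- Right Dirac operator `f ψ∂ = Σᵢ (∂f/∂xᵢ) ψⁱ`. -/
def DR (ψ : Fin 3 → V3) (f : V3 → Cl3) : V3 → Cl3 := fun x => ∑ i, pd i f x * ι3 (ψ i)

/-- Two-sided operator `φ∂ f ψ∂ = Σᵢⱼ φⁱ (∂²f/∂xᵢ∂xⱼ) ψʲ`. -/
def DLR (φ ψ : Fin 3 → V3) (f : V3 → Cl3) : V3 → Cl3 :=
  fun x => ∑ i, ∑ j, ι3 (φ i) * pd i (pd j f) x * ι3 (ψ j)

/-- Componentwise Laplacian. -/
def lap (f : V3 → Cl3) : V3 → Cl3 := fun x => ∑ i, pd i (pd i f) x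

/-- `ν(a) = Σᵢ ψⁱ a ψⁱ`. -/
def nu (ψ : Fin 3 → V3) (a : Cl3) : Cl3 := ∑ i, ι3 (ψ i) * a * ι3 (ψ i)

/-- `ω(a) = Σᵢ φⁱ a ψⁱ`. -/
def om (φ ψ : Fin 3 → V3) (a : Cl3) : Cl3 := ∑ i, ι3 (φ i) * a * ι3 (ψ i)

/-- `x_ψ = Σᵢ ψⁱ xᵢ`. -/
def xPsi (ψ : Fin 3 → V3) (x : V3) : Cl3 := ∑ i, x i • ι3 (ψ i)


section Alg
lemma Q3_apply (x : V3) : Q3 x = -(x 0 * x 0 + x 1 * x 1 + x 2 * x 2) := by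
  simp [Q3, QuadraticMap.weightedSumSquares_apply, Fin.sum_univ_three]

lemma polar_Q3 (x y : V3) :
    QuadraticMap.polar Q3 x y = -2 * (x 0 * y 0 + x 1 * y 1 + x 2 * y 2) := by
  simp only [QuadraticMap.polar, Q3_apply, Pi.add_apply]
  ring

def ee (i : Fin 3) : V3 := Pi.single i 1

lemma ι_mul_add_swap (a b : V3) : ι3 a * ι3 b + ι3 b * ι3 a
    = algebraMap ℝ Cl3 (QuadraticMap.polar Q3 a b) := CliffordAlgebra.ι_mul_ι_add_swap a b

lemma eps_sq (i : Fin 3) : ι3 (ee i) * ι3 (ee i) = -1 := by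
  have := CliffordAlgebra.ι_sq_scalar Q3 (ee i)
  rw [ι3, this, show Q3 (ee i) = -1 by fin_cases i <;> simp [Q3_apply, ee]]
  simp

lemma eps_swap {i j : Fin 3} (h : i ≠ j) :
    ι3 (ee i) * ι3 (ee j) = -(ι3 (ee j) * ι3 (ee i)) := by
  have h2 := ι_mul_add_swap (ee i) (ee j)
  rw [show QuadraticMap.polar Q3 (ee i) (ee j) = 0 by
    fin_cases i <;> fin_cases j <;> simp_all [polar_Q3, ee]] at h2
  simp only [map_zero] at h2
  exact eq_neg_of_add_eq_zero_left h2

lemma vec_decomp (v : V3) : v = v 0 • ee 0 + v 1 • ee 1 + v 2 • ee 2 := by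
  funext k; fin_cases k <;> simp [ee]


def genSet : Set Cl3 :=
  {1, ι3 (ee 0), ι3 (ee 1), ι3 (ee 2), ι3 (ee 0) * ι3 (ee 1), ι3 (ee 0) * ι3 (ee 2),
    ι3 (ee 1) * ι3 (ee 2), ι3 (ee 0) * ι3 (ee 1) * ι3 (ee 2)}

def Wspan : Submodule ℝ Cl3 := Submodule.span ℝ genSet

lemma swap3 {i j : Fin 3} (h : i ≠ j) (x : Cl3) :
    ι3 (ee i) * (ι3 (ee j) * x) = -(ι3 (ee j) * (ι3 (ee i) * x)) := by
  rw [← mul_assoc, eps_swap h, ← mul_assoc]; simp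

lemma sq3 (i : Fin 3) (x : Cl3) : ι3 (ee i) * (ι3 (ee i) * x) = -x := by
  rw [← mul_assoc, eps_sq]; simp

lemma eps_mul_mem (i : Fin 3) {w : Cl3} (hw : w ∈ Wspan) : ι3 (ee i) * w ∈ Wspan := by
  induction hw using Submodule.span_induction with
  | mem x hx =>
    have e10 := eps_swap (show (1:Fin 3) ≠ 0 by decide)
    have e20 := eps_swap (show (2:Fin 3) ≠ 0 by decide)
    have e21 := eps_swap (show (2:Fin 3) ≠ 1 by decide)
    have e10' := swap3 (show (1:Fin 3) ≠ 0 by decide)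
    have e20' := swap3 (show (2:Fin 3) ≠ 0 by decide)
    have e21' := swap3 (show (2:Fin 3) ≠ 1 by decide)
    have s0 := eps_sq 0; have s1 := eps_sq 1; have s2 := eps_sq 2
    have s0' := sq3 0; have s1' := sq3 1; have s2' := sq3 2
    have h1 : (1 : Cl3) ∈ Wspan := Submodule.subset_span (by left; rfl)
    have h2 : ι3 (ee 0) ∈ Wspan := Submodule.subset_span (by right; left; rfl)
    have h3 : ι3 (ee 1) ∈ Wspan := Submodule.subset_span (by right;right; left; rfl)
    have h4 : ι3 (ee 2) ∈ Wspan := Submodule.subset_span (by right;right;right; left; rfl)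
    have h5 : ι3 (ee 0) * ι3 (ee 1) ∈ Wspan :=
      Submodule.subset_span (by right;right;right;right; left; rfl)
    have h6 : ι3 (ee 0) * ι3 (ee 2) ∈ Wspan :=
      Submodule.subset_span (by right;right;right;right;right; left; rfl)
    have h7 : ι3 (ee 1) * ι3 (ee 2) ∈ Wspan :=
      Submodule.subset_span (by right;right;right;right;right;right; left; rfl)
    have h8' : ι3 (ee 0) * ι3 (ee 1) * ι3 (ee 2) ∈ Wspan :=
      Submodule.subset_span (by right;right;right;right;right;right;right; rfl)
    have h8 : ι3 (ee 0) * (ι3 (ee 1) * ι3 (ee 2)) ∈ Wspan := by rwa [← mul_assoc]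
    obtain rfl | rfl | rfl | rfl | rfl | rfl | rfl | rfl := hx <;> fin_cases i <;>
      simp only [Fin.reduceFinMk, mul_one, mul_assoc, s0', s1', s2', e10', e20', e21', s0, s1, s2,
        e10, e20, e21, mul_neg, neg_neg, neg_mem_iff] <;>
      first
        | exact h1 | exact h2 | exact h3 | exact h4 | exact h5 | exact h6 | exact h7 | exact h8
        
  | zero => simp
  | add x y _ _ hx hy => rw [mul_add]; exact add_mem hx hy
  | smul c x _ hx => rw [mul_smul_comm]; exact Submodule.smul_mem _ _ hx

lemma Wspan_eq_top : Wspan = ⊤ := by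
  rw [eq_top_iff]
  intro a _
  have h1 : (1 : Cl3) ∈ Wspan := Submodule.subset_span (by left; rfl)
  have key : ∀ b : Cl3, ∀ w ∈ Wspan, b * w ∈ Wspan := by
    intro b
    induction b using CliffordAlgebra.induction with
    | algebraMap r => intro w hw; rw [Algebra.algebraMap_eq_smul_one, smul_mul_assoc, one_mul]
                      exact Submodule.smul_mem _ _ hw
    | ι v => intro w hw
             rw [show (CliffordAlgebra.ι Q3) v = ι3 v from rfl, vec_decomp v]
             simp only [map_add, map_smul, add_mul, smul_mul_assoc]
             exact add_mem (add_mem (Submodule.smul_mem _ _ (eps_mul_mem 0 hw))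
               (Submodule.smul_mem _ _ (eps_mul_mem 1 hw)))
               (Submodule.smul_mem _ _ (eps_mul_mem 2 hw))
    | mul x y hx hy => intro w hw; rw [mul_assoc]; exact hx _ (hy _ hw)
    | add x y hx hy => intro w hw; rw [add_mul]; exact add_mem (hx w hw) (hy w hw)
  simpa using key a 1 h1

instance : FiniteDimensional ℝ Cl3 := by
  have hfin : genSet.Finite := by
    unfold genSet
    exact (Set.finite_singleton _).insert _ |>.insert _ |>.insert _ |>.insert _
      |>.insert _ |>.insert _ |>.insert _
  exact Module.finite_def.mpr ⟨hfin.toFinset, by rw [Set.Finite.coe_toFinset]; exact Wspan_eq_top⟩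

end Alg

section Analysis

local notation "eV" => (fun i => (Pi.single i 1 : V3))

def mulL (c : Cl3) : Cl3 →L[ℝ] Cl3 := LinearMap.toContinuousLinearMap (LinearMap.mulLeft ℝ c)
def mulR (c : Cl3) : Cl3 →L[ℝ] Cl3 := LinearMap.toContinuousLinearMap (LinearMap.mulRight ℝ c)

@[simp] lemma mulL_apply (c x : Cl3) : mulL c x = c * x := rfl
@[simp] lemma mulR_apply (c x : Cl3) : mulR c x = x * c := rfl

lemma pd_congr {F G : V3 → Cl3} {x : V3} (i : Fin 3) (h : F =ᶠ[nhds x] G) :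
    pd i F x = pd i G x := by
  unfold pd; rw [Filter.EventuallyEq.fderiv_eq h]

lemma pd_clm (L : Cl3 →L[ℝ] Cl3) {F : V3 → Cl3} {x : V3} (i : Fin 3)
    (hF : DifferentiableAt ℝ F x) : pd i (fun y => L (F y)) x = L (pd i F x) := by
  unfold pd
  have : HasFDerivAt (fun y => L (F y)) ((L : Cl3 →L[ℝ] Cl3).comp (fderiv ℝ F x)) x :=
    L.hasFDerivAt.comp x hF.hasFDerivAt
  rw [this.fderiv]
  rfl

lemma diffAt_clm (L : Cl3 →L[ℝ] Cl3) {F : V3 → Cl3} {x : V3} (hF : DifferentiableAt ℝ F x) :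
    DifferentiableAt ℝ (fun y => L (F y)) x :=
  L.differentiable.differentiableAt.comp x hF

lemma pd_sum {J : Type*} (s : Finset J) {F : J → V3 → Cl3} {x : V3} (i : Fin 3)
    (hF : ∀ j ∈ s, DifferentiableAt ℝ (F j) x) :
    pd i (fun y => ∑ j ∈ s, F j y) x = ∑ j ∈ s, pd i (F j) x := by
  unfold pd
  rw [fderiv_fun_sum hF]
  simp

lemma pd_smul (c : ℝ) {F : V3 → Cl3} {x : V3} (i : Fin 3) (hF : DifferentiableAt ℝ F x) :
    pd i (fun y => c • F y) x = c • pd i F x := by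
  unfold pd
  rw [fderiv_fun_const_smul hF]
  rfl

lemma pd_add {F G : V3 → Cl3} {x : V3} (i : Fin 3) (hF : DifferentiableAt ℝ F x)
    (hG : DifferentiableAt ℝ G x) :
    pd i (fun y => F y + G y) x = pd i F x + pd i G x := by
  unfold pd
  rw [fderiv_fun_add hF hG]
  rfl

variable {Ω : Set V3}

lemma pd_contDiffOn (hΩ : IsOpen Ω) {n : ℕ} {F : V3 → Cl3}
    (hF : ContDiffOn ℝ (n+1 : ℕ) F Ω) (i : Fin 3) : ContDiffOn ℝ n (pd i F) Ω := by
  have hF' : ContDiffOn ℝ ((n : WithTop ℕ∞) + 1) F Ω := by exact_mod_cast hF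
  have h := ((contDiffOn_succ_iff_fderiv_of_isOpen hΩ).mp hF').2.2
  exact h.clm_apply contDiffOn_const

lemma diffAt_of_C1 (hΩ : IsOpen Ω) {F : V3 → Cl3} (hF : ContDiffOn ℝ 1 F Ω)
    {x : V3} (hx : x ∈ Ω) : DifferentiableAt ℝ F x :=
  (hF.differentiableOn one_ne_zero).differentiableAt (hΩ.mem_nhds hx)

lemma schwarz {h : V3 → Cl3} {x : V3} (hh : ContDiffAt ℝ 2 h x) (i j : Fin 3) :
    pd i (pd j h) x = pd j (pd i h) x := by
  have hsymm := hh.isSymmSndFDerivAt (by simp)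
  have hd2 : DifferentiableAt ℝ (fderiv ℝ h) x :=
    (hh.fderiv_right (m := 1) (by norm_num)).differentiableAt one_ne_zero
  have key : ∀ k l : Fin 3, pd k (pd l h) x
      = fderiv ℝ (fderiv ℝ h) x (Pi.single k 1) (Pi.single l 1) := by
    intro k l
    unfold pd
    have : (fun y => fderiv ℝ h y (Pi.single l 1))
        = fun y => (ContinuousLinearMap.apply ℝ Cl3 (Pi.single l 1 : V3)) (fderiv ℝ h y) := rfl
    have h2 : HasFDerivAt (fun y => ((ContinuousLinearMap.apply ℝ Cl3) (Pi.single l 1 : V3))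
          (fderiv ℝ h y))
        (((ContinuousLinearMap.apply ℝ Cl3) (Pi.single l 1 : V3)).comp
          (fderiv ℝ (fderiv ℝ h) x)) x :=
      ((ContinuousLinearMap.apply ℝ Cl3 (Pi.single l 1 : V3)).hasFDerivAt).comp x
        hd2.hasFDerivAt
    rw [this, h2.fderiv]
    rfl
  rw [key i j, key j i, hsymm]

lemma mem_S_pd (hΩ : IsOpen Ω) {S : Submodule ℝ Cl3} {F : V3 → Cl3} {x : V3} (hx : x ∈ Ω)
    (hF : DifferentiableAt ℝ F x) (hmem : ∀ y ∈ Ω, F y ∈ S) (i : Fin 3) : pd i F x ∈ S := by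
  have hclosed : IsClosed (S : Set Cl3) := S.closed_of_finiteDimensional
  have hlim := hF.hasFDerivAt.lim (Pi.single i 1 : V3) (c := fun n : ℕ => (n : ℝ))
    (by simpa using tendsto_natCast_atTop_atTop (R := ℝ))
  refine hclosed.mem_of_tendsto hlim ?_
  have hx' : Filter.Tendsto (fun n : ℕ => x + ((n : ℝ))⁻¹ • (Pi.single i 1 : V3))
      Filter.atTop (nhds x) := by
    have : Filter.Tendsto (fun n : ℕ => ((n : ℝ))⁻¹) Filter.atTop (nhds 0) :=
      tendsto_inv_atTop_zero.comp (tendsto_natCast_atTop_atTop (R := ℝ))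
    have := (this.smul_const (Pi.single i 1 : V3)).const_add x
    simpa using this
  filter_upwards [hx' (hΩ.mem_nhds hx)] with n hn
  exact S.smul_mem _ (S.sub_mem (hmem _ hn) (hmem _ hx))

end Analysis


section StructAlg

variable {ψ : Fin 3 → V3}

lemma struct_polar (hψ : StructuralSet ψ) (i j : Fin 3) :
    QuadraticMap.polar Q3 (ψ i) (ψ j) = if i = j then -2 else 0 := by
  apply (algebraMap ℝ Cl3).injective
  rw [← ι_mul_add_swap, hψ i j]

lemma struct_dot (hψ : StructuralSet ψ) (i j : Fin 3) :
    ψ i 0 * ψ j 0 + ψ i 1 * ψ j 1 + ψ i 2 * ψ j 2 = if i = j then 1 else 0 := by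
  have h := struct_polar hψ i j
  rw [polar_Q3] at h
  by_cases hij : i = j <;> simp [hij] at h ⊢ <;> linarith

lemma struct_dual (hψ : StructuralSet ψ) (j k : Fin 3) :
    (∑ i, ψ i j * ψ i k) = if j = k then 1 else 0 := by
  have hM : (Matrix.of fun i j => ψ i j) * Matrix.transpose (Matrix.of fun i j => ψ i j) = 1 := by
    ext i j
    simp only [Matrix.mul_apply, Matrix.transpose_apply, Matrix.of_apply, Matrix.one_apply,
      Fin.sum_univ_three]
    exact struct_dot hψ i j
  have h2 := mul_eq_one_comm.mp hM
  have h3 := congrFun (congrFun h2 j) k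
  simpa [Matrix.mul_apply, Matrix.transpose_apply, Matrix.one_apply] using h3

lemma struct_expand (hψ : StructuralSet ψ) (b : V3) :
    ∑ i, (QuadraticMap.polar Q3 (ψ i) b) • ψ i = (-2 : ℝ) • b := by
  funext k
  have d0 := struct_dual hψ 0 k
  have d1 := struct_dual hψ 1 k
  have d2 := struct_dual hψ 2 k
  have hbk : b 0 * (if (0:Fin 3) = k then (1:ℝ) else 0) + b 1 * (if (1:Fin 3) = k then 1 else 0)
      + b 2 * (if (2:Fin 3) = k then 1 else 0) = b k := by
    fin_cases k <;> simp [Fin.reduceFinMk]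
  simp only [Finset.sum_apply, Pi.smul_apply, smul_eq_mul, polar_Q3, Fin.sum_univ_three]
  rw [Fin.sum_univ_three] at d0 d1 d2
  linear_combination (-2*b 0) * d0 + (-2*b 1) * d1 + (-2*b 2) * d2 - 2*hbk

lemma struct_expand' (hψ : StructuralSet ψ) (b : V3) :
    ∑ i, (QuadraticMap.polar Q3 (ψ i) b) • ι3 (ψ i) = (-2 : ℝ) • ι3 b := by
  rw [← map_smul, ← struct_expand hψ b, map_sum]
  simp only [map_smul]

lemma struct_eps_sq (hψ : StructuralSet ψ) (i : Fin 3) : ι3 (ψ i) * ι3 (ψ i) = -1 := by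
  have h := CliffordAlgebra.ι_sq_scalar Q3 (ψ i)
  have hq : Q3 (ψ i) = -1 := by
    have h2 := struct_dot hψ i i
    rw [if_pos rfl] at h2
    rw [Q3_apply, h2]
  rw [ι3, h, hq]
  simp

lemma struct_swap (hψ : StructuralSet ψ) (i : Fin 3) (b : V3) :
    ι3 (ψ i) * ι3 b = algebraMap ℝ Cl3 (QuadraticMap.polar Q3 (ψ i) b) - ι3 b * ι3 (ψ i) :=
  eq_sub_of_add_eq (ι_mul_add_swap (ψ i) b)

lemma nu_vec (hψ : StructuralSet ψ) (b : V3) : nu ψ (ι3 b) = ι3 b := by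
  unfold nu
  have step : ∀ i, ι3 (ψ i) * ι3 b * ι3 (ψ i)
      = (QuadraticMap.polar Q3 (ψ i) b) • ι3 (ψ i) + ι3 b := by
    intro i
    rw [struct_swap hψ i b, sub_mul, mul_assoc, struct_eps_sq hψ i, Algebra.smul_def]
    simp
  rw [Finset.sum_congr rfl (fun i _ => step i), Finset.sum_add_distrib, struct_expand' hψ b]
  rw [Finset.sum_const]
  simp only [Finset.card_univ, Fintype.card_fin]
  rw [show ((3:ℕ) • ι3 b = (3:ℝ) • ι3 b) from by
    rw [← Nat.cast_smul_eq_nsmul ℝ]; norm_num]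
  module

lemma nu_mul (hψ : StructuralSet ψ) (a b : V3) :
    nu ψ (ι3 a * ι3 b) = -(ι3 a * ι3 b) - (2:ℝ) • (ι3 b * ι3 a) := by
  unfold nu
  have step : ∀ i, ι3 (ψ i) * (ι3 a * ι3 b) * ι3 (ψ i)
      = (QuadraticMap.polar Q3 (ψ i) a) • (ι3 b * ι3 (ψ i))
        - ι3 a * (ι3 (ψ i) * ι3 b * ι3 (ψ i)) := by
    intro i
    rw [← mul_assoc, struct_swap hψ i a, Algebra.smul_def]
    noncomm_ring
  rw [Finset.sum_congr rfl (fun i _ => step i), Finset.sum_sub_distrib]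
  have h1 : ∑ i, (QuadraticMap.polar Q3 (ψ i) a) • (ι3 b * ι3 (ψ i))
      = ι3 b * ((-2:ℝ) • ι3 a) := by
    rw [← struct_expand' hψ a, Finset.mul_sum]
    simp only [mul_smul_comm]
  have h2 : ∑ i, ι3 a * (ι3 (ψ i) * ι3 b * ι3 (ψ i)) = ι3 a * ι3 b := by
    rw [← Finset.mul_sum]
    congr 1
    exact nu_vec hψ b
  rw [h1, h2, mul_smul_comm]
  module

end StructAlg


section Dirac

variable {Ω : Set V3}

lemma struct_sum_DD {η : Fin 3 → V3} (hη : StructuralSet η) (D : Fin 3 → Fin 3 → Cl3)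
    (hsymm : ∀ i j, D i j = D j i) :
    ∑ i, ∑ j, ι3 (η i) * ι3 (η j) * D i j = - ∑ i, D i i := by
  have h2 : (2:ℝ) • (∑ i, ∑ j, ι3 (η i) * ι3 (η j) * D i j)
      = (2:ℝ) • (- ∑ i, D i i) := by
    have swap : ∑ i, ∑ j, ι3 (η i) * ι3 (η j) * D i j
        = ∑ i, ∑ j, ι3 (η j) * ι3 (η i) * D i j := by
      rw [Finset.sum_comm]
      exact Finset.sum_congr rfl fun j _ => Finset.sum_congr rfl fun i _ => by rw [hsymm i j]
    calc (2:ℝ) • (∑ i, ∑ j, ι3 (η i) * ι3 (η j) * D i j)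
        = (∑ i, ∑ j, ι3 (η i) * ι3 (η j) * D i j)
          + (∑ i, ∑ j, ι3 (η j) * ι3 (η i) * D i j) := by rw [← swap, two_smul]
      _ = ∑ i, ∑ j, (ι3 (η i) * ι3 (η j) + ι3 (η j) * ι3 (η i)) * D i j := by
          rw [← Finset.sum_add_distrib]
          exact Finset.sum_congr rfl fun i _ => by
            rw [← Finset.sum_add_distrib]
            exact Finset.sum_congr rfl fun j _ => (add_mul _ _ _).symm
      _ = ∑ i, ∑ j, algebraMap ℝ Cl3 (if i = j then -2 else 0) * D i j := by
          exact Finset.sum_congr rfl fun i _ => Finset.sum_congr rfl fun j _ => by rw [hη i j]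
      _ = ∑ i, (-2 : ℝ) • D i i := by
          refine Finset.sum_congr rfl fun i _ => ?_
          rw [Finset.sum_eq_single i]
          · rw [if_pos rfl, Algebra.smul_def]
          · intro j _ hji; rw [if_neg (Ne.symm hji), map_zero, zero_mul]
          · intro hi; exact absurd (Finset.mem_univ i) hi
      _ = (2:ℝ) • (- ∑ i, D i i) := by
          rw [← Finset.smul_sum, smul_neg]
          module
  exact smul_right_injective Cl3 two_ne_zero h2

lemma DL_expand (hΩ : IsOpen Ω) {h : V3 → Cl3} (hh : ContDiffOn ℝ 2 h Ω)
    (η : Fin 3 → V3) {x : V3} (hx : x ∈ Ω) (i : Fin 3) :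
    pd i (DL η h) x = ∑ j, ι3 (η j) * pd i (pd j h) x := by
  have hdh : ∀ j, DifferentiableAt ℝ (pd j h) x := fun j =>
    diffAt_of_C1 hΩ (pd_contDiffOn hΩ (n := 1) (by exact_mod_cast hh) j) hx
  rw [show DL η h = fun y => ∑ j, mulL (ι3 (η j)) (pd j h y) from rfl]
  rw [pd_sum Finset.univ i (fun j _ =>
    diffAt_clm (mulL (ι3 (η j))) (hdh j))]
  exact Finset.sum_congr rfl fun j _ => pd_clm (mulL (ι3 (η j))) i (hdh j)

lemma DR_expand (hΩ : IsOpen Ω) {h : V3 → Cl3} (hh : ContDiffOn ℝ 2 h Ω)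
    (η : Fin 3 → V3) {x : V3} (hx : x ∈ Ω) (i : Fin 3) :
    pd i (DR η h) x = ∑ j, pd i (pd j h) x * ι3 (η j) := by
  have hdh : ∀ j, DifferentiableAt ℝ (pd j h) x := fun j =>
    diffAt_of_C1 hΩ (pd_contDiffOn hΩ (n := 1) (by exact_mod_cast hh) j) hx
  rw [show DR η h = fun y => ∑ j, mulR (ι3 (η j)) (pd j h y) from rfl]
  rw [pd_sum Finset.univ i (fun j _ =>
    diffAt_clm (mulR (ι3 (η j))) (hdh j))]
  exact Finset.sum_congr rfl fun j _ => pd_clm (mulR (ι3 (η j))) i (hdh j)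

lemma DL_DL_eq_neg_lap {η : Fin 3 → V3} (hη : StructuralSet η) (hΩ : IsOpen Ω)
    {h : V3 → Cl3} (hh : ContDiffOn ℝ 2 h Ω) {x : V3} (hx : x ∈ Ω) :
    DL η (DL η h) x = - lap h x := by
  have hsymm : ∀ i j, pd i (pd j h) x = pd j (pd i h) x := fun i j =>
    schwarz (hh.contDiffAt (hΩ.mem_nhds hx)) i j
  have hexp : DL η (DL η h) x = ∑ i, ∑ j, ι3 (η i) * ι3 (η j) * pd i (pd j h) x := by
    rw [show DL η (DL η h) x = ∑ i, ι3 (η i) * pd i (DL η h) x from rfl]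
    refine Finset.sum_congr rfl fun i _ => ?_
    rw [DL_expand hΩ hh η hx i, Finset.mul_sum]
    exact Finset.sum_congr rfl fun j _ => (mul_assoc _ _ _).symm
  rw [hexp, struct_sum_DD hη _ hsymm]
  rfl

lemma lap_DL (hΩ : IsOpen Ω) {f : V3 → Cl3} (hf : ContDiffOn ℝ 3 f Ω)
    (η : Fin 3 → V3) {x : V3} (hx : x ∈ Ω) :
    lap (DL η f) x = ∑ j, ι3 (η j) * (∑ i, pd i (pd i (pd j f)) x) := by
  have hf2 : ContDiffOn ℝ 2 f Ω := hf.of_le (by norm_num)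
  have hd2 : ∀ i j, DifferentiableAt ℝ (pd i (pd j f)) x := fun i j =>
    diffAt_of_C1 hΩ (pd_contDiffOn hΩ (n := 1)
      (by exact_mod_cast pd_contDiffOn hΩ (n := 2) (by exact_mod_cast hf) j) i) hx
  have step : ∀ i, pd i (pd i (DL η f)) x = ∑ j, ι3 (η j) * pd i (pd i (pd j f)) x := by
    intro i
    have hev : pd i (DL η f) =ᶠ[nhds x] fun y => ∑ j, mulL (ι3 (η j)) (pd i (pd j f) y) := by
      filter_upwards [hΩ.mem_nhds hx] with y hy
      exact DL_expand hΩ hf2 η hy i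
    rw [pd_congr i hev, pd_sum Finset.univ i (fun j _ =>
      diffAt_clm (mulL (ι3 (η j))) (hd2 i j))]
    exact Finset.sum_congr rfl fun j _ => pd_clm (mulL (ι3 (η j))) i (hd2 i j)
  rw [show lap (DL η f) x = ∑ i, pd i (pd i (DL η f)) x from rfl,
    Finset.sum_congr rfl fun i _ => step i, Finset.sum_comm]
  exact Finset.sum_congr rfl fun j _ => (Finset.mul_sum _ _ _).symm

lemma lap_DR (hΩ : IsOpen Ω) {f : V3 → Cl3} (hf : ContDiffOn ℝ 3 f Ω)
    (η : Fin 3 → V3) {x : V3} (hx : x ∈ Ω) :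
    lap (DR η f) x = ∑ j, (∑ i, pd i (pd i (pd j f)) x) * ι3 (η j) := by
  have hf2 : ContDiffOn ℝ 2 f Ω := hf.of_le (by norm_num)
  have hd2 : ∀ i j, DifferentiableAt ℝ (pd i (pd j f)) x := fun i j =>
    diffAt_of_C1 hΩ (pd_contDiffOn hΩ (n := 1)
      (by exact_mod_cast pd_contDiffOn hΩ (n := 2) (by exact_mod_cast hf) j) i) hx
  have step : ∀ i, pd i (pd i (DR η f)) x = ∑ j, pd i (pd i (pd j f)) x * ι3 (η j) := by
    intro i
    have hev : pd i (DR η f) =ᶠ[nhds x] fun y => ∑ j, mulR (ι3 (η j)) (pd i (pd j f) y) := by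
      filter_upwards [hΩ.mem_nhds hx] with y hy
      exact DR_expand hΩ hf2 η hy i
    rw [pd_congr i hev, pd_sum Finset.univ i (fun j _ =>
      diffAt_clm (mulR (ι3 (η j))) (hd2 i j))]
    exact Finset.sum_congr rfl fun j _ => pd_clm (mulR (ι3 (η j))) i (hd2 i j)
  rw [show lap (DR η f) x = ∑ i, pd i (pd i (DR η f)) x from rfl,
    Finset.sum_congr rfl fun i _ => step i, Finset.sum_comm]
  exact Finset.sum_congr rfl fun j _ => (Finset.sum_mul _ _ _).symm

lemma contDiffOn_DL (hΩ : IsOpen Ω) {f : V3 → Cl3} (hf : ContDiffOn ℝ 3 f Ω)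
    (η : Fin 3 → V3) : ContDiffOn ℝ 2 (DL η f) Ω := by
  rw [show DL η f = fun y => ∑ i, mulL (ι3 (η i)) (pd i f y) from rfl]
  exact ContDiffOn.sum fun i _ => (mulL (ι3 (η i))).contDiff.comp_contDiffOn
    (by exact_mod_cast pd_contDiffOn hΩ (n := 2) (by exact_mod_cast hf) i)

lemma contDiffOn_DR (hΩ : IsOpen Ω) {f : V3 → Cl3} (hf : ContDiffOn ℝ 3 f Ω)
    (η : Fin 3 → V3) : ContDiffOn ℝ 2 (DR η f) Ω := by
  rw [show DR η f = fun y => ∑ i, mulR (ι3 (η i)) (pd i f y) from rfl]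
  exact ContDiffOn.sum fun i _ => (mulR (ι3 (η i))).contDiff.comp_contDiffOn
    (by exact_mod_cast pd_contDiffOn hΩ (n := 2) (by exact_mod_cast hf) i)

lemma pd_zero_fun (i : Fin 3) (x : V3) : pd i (fun _ => (0:Cl3)) x = 0 := by
  unfold pd
  simp

lemma nu_sum_smul {ψ : Fin 3 → V3} (c d : ℝ) (z w : Cl3) :
    nu ψ (c • z + d • w) = c • nu ψ z + d • nu ψ w := by
  unfold nu
  rw [Finset.smul_sum, Finset.smul_sum, ← Finset.sum_add_distrib]
  refine Finset.sum_congr rfl fun i _ => ?_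
  rw [mul_add, add_mul, mul_smul_comm, mul_smul_comm, smul_mul_assoc, smul_mul_assoc]

lemma nu_sum {ψ : Fin 3 → V3} {J : Type*} (s : Finset J) (z : J → Cl3) :
    nu ψ (∑ j ∈ s, z j) = ∑ j ∈ s, nu ψ (z j) := by
  unfold nu
  rw [Finset.sum_comm]
  refine Finset.sum_congr rfl fun i _ => ?_
  rw [Finset.mul_sum, Finset.sum_mul]

end Dirac

/-- a `C³` solution of the generalized Lamé–Navier system
`α(φ∂ u⃗ ψ∂) + β(φ∂ψ∂ u⃗) = 0` satisfies `ψ∂ψ∂ψ∂ u⃗ = 0`. -/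
theorem stmt11 (φ ψ : Fin 3 → V3) (hφ : StructuralSet φ) (hψ : StructuralSet ψ)
    (μ lam : ℝ) (hμ : 0 < μ) (hlam : -(2 * μ) / 3 < lam)
    (α β : ℝ) (hα : α = (μ + lam) / 2) (hβ : β = (3 * μ + lam) / 2)
    (Ω : Set V3) (hΩ : IsOpen Ω) (u : V3 → V3)
    (hu : ContDiffOn ℝ 3 (fun y => ι3 (u y)) Ω)
    (hL : ∀ x ∈ Ω, α • DLR φ ψ (fun y => ι3 (u y)) x
        + β • DL φ (DL ψ (fun y => ι3 (u y))) x = 0) :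
    ∀ x ∈ Ω, DL ψ (DL ψ (DL ψ (fun y => ι3 (u y)))) x = 0 := by
  intro x hx
  set f : V3 → Cl3 := fun y => ι3 (u y) with hfdef
  have hf3 : ContDiffOn ℝ 3 f Ω := hu
  have hf2 : ContDiffOn ℝ 2 f Ω := hf3.of_le (by norm_num)
  have hpd1 : ∀ j, ContDiffOn ℝ 2 (pd j f) Ω := fun j =>
    by exact_mod_cast pd_contDiffOn hΩ (n := 2) (by exact_mod_cast hf3) j
  have hpd2 : ∀ i j, ContDiffOn ℝ 1 (pd i (pd j f)) Ω := fun i j =>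
    by exact_mod_cast pd_contDiffOn hΩ (n := 1) (by exact_mod_cast hpd1 j) i
  have hd0 : ∀ y ∈ Ω, DifferentiableAt ℝ f y := fun y hy =>
    diffAt_of_C1 hΩ (hf3.of_le (by norm_num)) hy
  have hd1 : ∀ j, ∀ y ∈ Ω, DifferentiableAt ℝ (pd j f) y := fun j y hy =>
    diffAt_of_C1 hΩ ((hpd1 j).of_le one_le_two) hy
  have hd2 : ∀ i j, ∀ y ∈ Ω, DifferentiableAt ℝ (pd i (pd j f)) y := fun i j y hy =>
    diffAt_of_C1 hΩ (hpd2 i j) hy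
  have hCDL : ContDiffOn ℝ 2 (DL ψ f) Ω := contDiffOn_DL hΩ hf3 ψ
  have hCDR : ContDiffOn ℝ 2 (DR ψ f) Ω := contDiffOn_DR hΩ hf3 ψ
  set A : V3 → Cl3 := fun y => α • DR ψ f y + β • DL ψ f y with hAdef
  have hCA : ContDiffOn ℝ 2 A Ω := (hCDR.const_smul α).add (hCDL.const_smul β)
  have hdDR : ∀ y ∈ Ω, DifferentiableAt ℝ (DR ψ f) y := fun y hy =>
    diffAt_of_C1 hΩ (hCDR.of_le one_le_two) hy
  have hdDL : ∀ y ∈ Ω, DifferentiableAt ℝ (DL ψ f) y := fun y hy =>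
    diffAt_of_C1 hΩ (hCDL.of_le one_le_two) hy
  have hDLR : ∀ y ∈ Ω, DL φ (DR ψ f) y = DLR φ ψ f y := by
    intro y hy
    rw [show DL φ (DR ψ f) y = ∑ i, ι3 (φ i) * pd i (DR ψ f) y from rfl]
    rw [show DLR φ ψ f y = ∑ i, ∑ j, ι3 (φ i) * pd i (pd j f) y * ι3 (ψ j) from rfl]
    refine Finset.sum_congr rfl fun i _ => ?_
    rw [DR_expand hΩ hf2 ψ hy i, Finset.mul_sum]
    exact Finset.sum_congr rfl fun j _ => by rw [mul_assoc]
  have hDLA : ∀ y ∈ Ω, DL φ A y = 0 := by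
    intro y hy
    have hpdA : ∀ i, pd i A y = α • pd i (DR ψ f) y + β • pd i (DL ψ f) y := by
      intro i
      rw [hAdef]
      rw [pd_add (F := fun y => α • DR ψ f y) (G := fun y => β • DL ψ f y) i ((hdDR y hy).const_smul α) ((hdDL y hy).const_smul β),
        pd_smul α i (hdDR y hy), pd_smul β i (hdDL y hy)]
    have hDA : DL φ A y = α • DL φ (DR ψ f) y + β • DL φ (DL ψ f) y := by
      rw [show DL φ A y = ∑ i, ι3 (φ i) * pd i A y from rfl]
      rw [show DL φ (DR ψ f) y = ∑ i, ι3 (φ i) * pd i (DR ψ f) y from rfl]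
      rw [show DL φ (DL ψ f) y = ∑ i, ι3 (φ i) * pd i (DL ψ f) y from rfl]
      rw [Finset.smul_sum, Finset.smul_sum, ← Finset.sum_add_distrib]
      refine Finset.sum_congr rfl fun i _ => ?_
      rw [hpdA i, mul_add, mul_smul_comm, mul_smul_comm]
    rw [hDA, hDLR y hy]
    exact hL y hy
  have hlapA0 : lap A x = 0 := by
    have h1 : DL φ (DL φ A) x = - lap A x := DL_DL_eq_neg_lap hφ hΩ hCA hx
    have h2 : DL φ (DL φ A) x = 0 := by
      rw [show DL φ (DL φ A) x = ∑ i, ι3 (φ i) * pd i (DL φ A) x from rfl]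
      have hev : ∀ i, pd i (DL φ A) x = 0 := by
        intro i
        have heq : DL φ A =ᶠ[nhds x] (fun _ => (0:Cl3)) := by
          filter_upwards [hΩ.mem_nhds hx] with y hy
          exact hDLA y hy
        rw [pd_congr i heq, pd_zero_fun]
      rw [Finset.sum_congr rfl fun i _ => by rw [hev i, mul_zero]]
      simp
    rw [h1] at h2
    exact neg_eq_zero.mp h2
  have hdpdDR : ∀ i, DifferentiableAt ℝ (pd i (DR ψ f)) x := fun i =>
    diffAt_of_C1 hΩ (by exact_mod_cast pd_contDiffOn hΩ (n := 1) (by exact_mod_cast hCDR) i) hx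
  have hdpdDL : ∀ i, DifferentiableAt ℝ (pd i (DL ψ f)) x := fun i =>
    diffAt_of_C1 hΩ (by exact_mod_cast pd_contDiffOn hΩ (n := 1) (by exact_mod_cast hCDL) i) hx
  have hlapA : lap A x = α • lap (DR ψ f) x + β • lap (DL ψ f) x := by
    have step : ∀ i, pd i (pd i A) x
        = α • pd i (pd i (DR ψ f)) x + β • pd i (pd i (DL ψ f)) x := by
      intro i
      have hev : pd i A =ᶠ[nhds x]
          fun y => α • pd i (DR ψ f) y + β • pd i (DL ψ f) y := by
        filter_upwards [hΩ.mem_nhds hx] with y hy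
        rw [hAdef, pd_add (F := fun y => α • DR ψ f y) (G := fun y => β • DL ψ f y) i ((hdDR y hy).const_smul α) ((hdDL y hy).const_smul β),
          pd_smul α i (hdDR y hy), pd_smul β i (hdDL y hy)]
      rw [pd_congr i hev,
        pd_add (F := fun y => α • pd i (DR ψ f) y) (G := fun y => β • pd i (DL ψ f) y) i ((hdpdDR i).const_smul α) ((hdpdDL i).const_smul β),
        pd_smul α i (hdpdDR i), pd_smul β i (hdpdDL i)]
    rw [show lap A x = ∑ i, pd i (pd i A) x from rfl,
      Finset.sum_congr rfl fun i _ => step i,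
      show lap (DR ψ f) x = ∑ i, pd i (pd i (DR ψ f)) x from rfl,
      show lap (DL ψ f) x = ∑ i, pd i (pd i (DL ψ f)) x from rfl,
      Finset.smul_sum, Finset.smul_sum, ← Finset.sum_add_distrib]
  set m : Fin 3 → Cl3 := fun j => ∑ i, pd i (pd i (pd j f)) x with hmdef
  set P : Cl3 := ∑ j, ι3 (ψ j) * m j with hPdef
  set Q : Cl3 := ∑ j, m j * ι3 (ψ j) with hQdef
  have hP : lap (DL ψ f) x = P := lap_DL hΩ hf3 ψ hx
  have hQ : lap (DR ψ f) x = Q := lap_DR hΩ hf3 ψ hx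
  have h0 : α • Q + β • P = 0 := by rw [← hP, ← hQ, ← hlapA, hlapA0]
  have hmvec : ∀ j, ∃ b : V3, m j = ι3 b := by
    intro j
    have hS0 : ∀ y ∈ Ω, f y ∈ LinearMap.range ι3 := fun y _ => ⟨u y, rfl⟩
    have hS1 : ∀ y ∈ Ω, pd j f y ∈ LinearMap.range ι3 := fun y hy =>
      mem_S_pd hΩ hy (hd0 y hy) hS0 j
    have hS2 : ∀ i, ∀ y ∈ Ω, pd i (pd j f) y ∈ LinearMap.range ι3 := fun i y hy =>
      mem_S_pd hΩ hy (hd1 j y hy) hS1 i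
    have hS3 : ∀ i, pd i (pd i (pd j f)) x ∈ LinearMap.range ι3 := fun i =>
      mem_S_pd hΩ hx (hd2 i j x hx) (hS2 i) i
    have hmm : m j ∈ LinearMap.range ι3 := by
      rw [hmdef]
      exact Submodule.sum_mem _ fun i _ => hS3 i
    obtain ⟨b, hb⟩ := hmm
    exact ⟨b, hb.symm⟩
  have hnuP : nu ψ P = -P - (2:ℝ) • Q := by
    rw [hPdef, nu_sum]
    have hterm : ∀ j, nu ψ (ι3 (ψ j) * m j)
        = -(ι3 (ψ j) * m j) - (2:ℝ) • (m j * ι3 (ψ j)) := by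
      intro j
      obtain ⟨b, hb⟩ := hmvec j
      rw [hb]
      exact nu_mul hψ (ψ j) b
    rw [Finset.sum_congr rfl fun j _ => hterm j, hQdef, Finset.sum_sub_distrib,
      ← Finset.sum_neg_distrib, Finset.smul_sum]
  have hnuQ : nu ψ Q = -Q - (2:ℝ) • P := by
    rw [hQdef, nu_sum]
    have hterm : ∀ j, nu ψ (m j * ι3 (ψ j))
        = -(m j * ι3 (ψ j)) - (2:ℝ) • (ι3 (ψ j) * m j) := by
      intro j
      obtain ⟨b, hb⟩ := hmvec j
      rw [hb]
      exact nu_mul hψ b (ψ j)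
    rw [Finset.sum_congr rfl fun j _ => hterm j, hPdef, Finset.sum_sub_distrib,
      ← Finset.sum_neg_distrib, Finset.smul_sum]
  have hnu0 : α • nu ψ Q + β • nu ψ P = 0 := by
    rw [← nu_sum_smul, h0]
    simp [nu]
  have hnu : α • (-Q - (2:ℝ) • P) + β • (-P - (2:ℝ) • Q) = 0 := by
    rw [← hnuQ, ← hnuP]; exact hnu0
  have key : (2*β^2 - 2*α^2) • P = 0 := by
    linear_combination (norm := module) α • hnu + (α + 2*β) • h0
  have hcoef : (2*β^2 - 2*α^2) ≠ 0 := by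
    have h1 : β - α = μ := by rw [hα, hβ]; ring
    have h2 : β + α = 2*μ + lam := by rw [hα, hβ]; ring
    have h3 : 2*μ + lam > 0 := by linarith
    have h4 : 2*β^2 - 2*α^2 = 2*(β - α)*(β + α) := by ring
    rw [h4, h1, h2]
    positivity
  have hP0 : P = 0 := by
    rcases smul_eq_zero.mp key with h | h
    · exact absurd h hcoef
    · exact h
  rw [DL_DL_eq_neg_lap hψ hΩ hCDL hx, hP, hP0, neg_zero]
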